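/- (Lower semicontinuity of the minimal time in the impulse instant) Let M > 0 and τ ≥ 0, and let (τ_n) be a sequence of nonnegative reals with τ_n → τ. Then t*(M,τ) ≤ liminf_{n→∞} t*(M,τ_n). -/

import Mathlib

open RealInnerProductSpace Filter

/-- A bounded real sequence has a limit along any ultrafilter. -/
lemma ult_lim_of_bounded (𝒰 : Ultrafilter ℕ) (g : ℕ → ℝ) (C : ℝ)
    (h : ∀ n, |g n| ≤ C) : ∃ l : ℝ, |l| ≤ C ∧ Tendsto g 𝒰 (nhds l) := by
  have hmem : ∀ n, g n ∈ Set.Icc (-C) C := fun n => abs_le.mp (h n)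
  have hle : (𝒰.map g : Filter ℝ) ≤ Filter.principal (Set.Icc (-C) C) := by
    rw [Ultrafilter.coe_map, Filter.le_principal_iff, Filter.mem_map]
    exact Filter.Eventually.of_forall hmem
  obtain ⟨l, hl, hlim⟩ := (isCompact_Icc (a := -C) (b := C)).ultrafilter_le_nhds
    (𝒰.map g) hle
  exact ⟨l, abs_le.mpr hl, hlim⟩

theorem stmt_10
    {H : Type*} [NormedAddCommGroup H] [InnerProductSpace ℝ H] [CompleteSpace H]
    (lam : ℝ) (hlam : 0 < lam)
    (S : ℝ → H →L[ℝ] H)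
    (hS0 : S 0 = ContinuousLinearMap.id ℝ H)
    (hSadd : ∀ s t : ℝ, 0 ≤ s → 0 ≤ t → S (s + t) = (S s).comp (S t))
    (hSsa : ∀ t : ℝ, 0 ≤ t → ∀ x z : H, ⟪S t x, z⟫ = ⟪x, S t z⟫)
    (hScont : ∀ y : H, ContinuousOn (fun t => S t y) (Set.Ici (0 : ℝ)))
    (hSdecay : ∀ t : ℝ, 0 ≤ t → ∀ y : H, ‖S t y‖ ≤ Real.exp (-(lam * t)) * ‖y‖)
    (P : H →L[ℝ] H)
    (hPsa : ∀ x z : H, ⟪P x, z⟫ = ⟪x, P z⟫)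
    (hPnorm : ∀ u : H, ‖P u‖ ≤ ‖u‖)
    (y₀ : H) (r : ℝ) (hr : 0 < r)
    (tS : ℝ → ℝ → ℝ)
    (htS : ∀ M τ : ℝ, tS M τ =
      sInf {T : ℝ | τ ≤ T ∧ ∃ u : H, ‖u‖ ≤ M ∧ ‖S T y₀ + S (T - τ) (P u)‖ ≤ r})
    (M τ : ℝ) (hM : 0 < M) (hτ : 0 ≤ τ)
    (τseq : ℕ → ℝ) (hτn : ∀ n, 0 ≤ τseq n)
    (hconv : Tendsto τseq atTop (nhds τ)) :
    tS M τ ≤ atTop.liminf (fun n => tS M (τseq n)) := by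
  classical
  set A : ℝ → Set ℝ := fun σ =>
    {T : ℝ | σ ≤ T ∧ ∃ u : H, ‖u‖ ≤ M ∧ ‖S T y₀ + S (T - σ) (P u)‖ ≤ r} with hA
  have htS' : ∀ σ : ℝ, tS M σ = sInf (A σ) := fun σ => htS M σ
  -- choose T₁ ≥ 0 beyond which the free solution has norm ≤ r
  obtain ⟨T₁, hT₁0, hT₁⟩ :
      ∃ T₁ : ℝ, 0 ≤ T₁ ∧ ∀ T ≥ T₁, Real.exp (-(lam * T)) * ‖y₀‖ ≤ r := by
    have h1 : Tendsto (fun T : ℝ => Real.exp (-(lam * T)) * ‖y₀‖) atTop (nhds 0) := by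
      have h2 : Tendsto (fun T : ℝ => -(lam * T)) atTop atBot := by
        have h2a : Tendsto (fun T : ℝ => lam * T) atTop atTop :=
          (tendsto_id (α := ℝ)).const_mul_atTop hlam
        exact tendsto_neg_atTop_atBot.comp h2a
      simpa using (Real.tendsto_exp_atBot.comp h2).mul_const ‖y₀‖
    have h3 : ∀ᶠ T in atTop, Real.exp (-(lam * T)) * ‖y₀‖ ≤ r :=
      h1.eventually (eventually_le_nhds hr)
    obtain ⟨N, hN⟩ := eventually_atTop.mp h3
    exact ⟨max N 0, le_max_right _ _, fun T hT => hN T (le_trans (le_max_left _ _) hT)⟩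
  -- nonemptiness and lower bounds for the sets A σ
  have hmem : ∀ σ : ℝ, 0 ≤ σ → max σ T₁ ∈ A σ := by
    intro σ hσ
    refine ⟨le_max_left _ _, 0, by simpa using hM.le, ?_⟩
    simp only [map_zero, add_zero]
    calc ‖S (max σ T₁) y₀‖ ≤ Real.exp (-(lam * max σ T₁)) * ‖y₀‖ :=
          hSdecay _ (le_trans hT₁0 (le_max_right _ _)) y₀
      _ ≤ r := hT₁ _ (le_max_right _ _)
  have hbdd : ∀ σ : ℝ, BddBelow (A σ) := fun σ => ⟨σ, fun T hT => hT.1⟩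
  have hlow : ∀ σ : ℝ, 0 ≤ σ → σ ≤ tS M σ := by
    intro σ hσ
    rw [htS']
    exact le_csInf ⟨_, hmem σ hσ⟩ fun T hT => hT.1
  -- upper bound for tS M σ
  have hup : ∀ σ : ℝ, 0 ≤ σ → tS M σ ≤ max σ T₁ := by
    intro σ hσ
    rw [htS']
    exact csInf_le (hbdd σ) (hmem σ hσ)
  -- the sequence a n = tS M (τseq n) is bounded
  obtain ⟨B, hB⟩ : ∃ B : ℝ, ∀ n, τseq n ≤ B := by
    obtain ⟨B, hB⟩ := hconv.bddAbove_range
    exact ⟨B, fun n => hB ⟨n, rfl⟩⟩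
  set a : ℕ → ℝ := fun n => tS M (τseq n) with ha
  have haup : ∀ n, a n ≤ max B T₁ := fun n =>
    le_trans (hup _ (hτn n)) (max_le_max (hB n) le_rfl)
  have halow : ∀ n, τseq n ≤ a n := fun n => hlow _ (hτn n)
  have hbddU : IsBoundedUnder (· ≤ ·) atTop a :=
    Filter.isBoundedUnder_of ⟨max B T₁, haup⟩
  have hbddL : IsBoundedUnder (· ≥ ·) atTop a :=
    Filter.isBoundedUnder_of ⟨0, fun n => le_trans (hτn n) (halow n)⟩
  set L : ℝ := atTop.liminf a with hL
  -- τ ≤ L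
  have hτL : τ ≤ L := by
    have h1 : atTop.liminf τseq ≤ atTop.liminf a :=
      liminf_le_liminf (Filter.Eventually.of_forall halow)
        (Filter.isBoundedUnder_of ⟨0, hτn⟩) (hbddU.isCoboundedUnder_ge)
    rwa [hconv.liminf_eq] at h1
  have hL0 : 0 ≤ L := le_trans hτ hτL
  -- L is a cluster value of a : get an ultrafilter along which a → L
  have hclus : MapClusterPt L atTop a := by
    rw [mapClusterPt_iff_frequently]
    intro s hs
    obtain ⟨ε, hε, hball⟩ := Metric.mem_nhds_iff.mp hs
    have hfreq : ∃ᶠ n in atTop, a n < L + ε :=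
      frequently_lt_of_liminf_lt hbddU.isCoboundedUnder_ge (by linarith)
    have hev : ∀ᶠ n in atTop, L - ε < a n :=
      eventually_lt_of_lt_liminf (by linarith) hbddL
    refine (hfreq.and_eventually hev).mono ?_
    rintro n ⟨h1, h2⟩
    apply hball
    rw [Metric.mem_ball, Real.dist_eq, abs_lt]
    constructor <;> linarith
  obtain ⟨𝒰, h𝒰le, h𝒰a⟩ := mapClusterPt_iff_ultrafilter.mp hclus
  -- choose almost-minimal times T n ∈ A (τseq n)
  have hTn : ∀ n : ℕ, ∃ T ∈ A (τseq n), T < sInf (A (τseq n)) + (1 / (n + 1) : ℝ) := by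
    intro n
    apply Real.lt_sInf_add_pos ⟨_, hmem _ (hτn n)⟩
    positivity
  choose T hTmem hTlt using hTn
  have hTlow : ∀ n, a n ≤ T n := by
    intro n
    show tS M (τseq n) ≤ T n
    rw [htS']
    exact csInf_le (hbdd _) (hTmem n)
  have hTup : ∀ n, T n ≤ a n + 1 / (n + 1) := by
    intro n
    have := hTlt n
    rw [← htS'] at this
    exact this.le
  -- T n → L along 𝒰
  have hinv : Tendsto (fun n : ℕ => (1 / (n + 1) : ℝ)) atTop (nhds 0) :=
    tendsto_one_div_add_atTop_nhds_zero_nat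
  have hTlim : Tendsto T 𝒰 (nhds L) := by
    refine tendsto_of_tendsto_of_tendsto_of_le_of_le h𝒰a
      (by simpa using h𝒰a.add ((hinv.mono_left h𝒰le))) hTlow hTup
  -- controls
  choose U hUnorm hUr using fun n => (hTmem n).2
  have hTτ : ∀ n, τseq n ≤ T n := fun n => (hTmem n).1
  have hT0 : ∀ n, 0 ≤ T n := fun n => le_trans (hτn n) (hTτ n)
  set t : ℕ → ℝ := fun n => T n - τseq n with ht
  have ht0 : ∀ n, 0 ≤ t n := fun n => sub_nonneg.mpr (hTτ n)
  have hτ𝒰 : Tendsto τseq 𝒰 (nhds τ) := hconv.mono_left h𝒰le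
  have htlim : Tendsto t 𝒰 (nhds (L - τ)) := hTlim.sub hτ𝒰
  have hLτ0 : 0 ≤ L - τ := sub_nonneg.mpr hτL
  -- strong continuity along 𝒰
  have hSc : ∀ (w : H) (g : ℕ → ℝ), (∀ n, 0 ≤ g n) → (0 ≤ L - τ) →
      Tendsto g 𝒰 (nhds (L - τ)) → Tendsto (fun n => S (g n) w) 𝒰 (nhds (S (L - τ) w)) := by
    intro w g hg _ hglim
    have hcw : ContinuousWithinAt (fun s => S s w) (Set.Ici (0 : ℝ)) (L - τ) :=
      (hScont w) (L - τ) hLτ0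
    apply hcw.tendsto.comp
    rw [tendsto_nhdsWithin_iff]
    exact ⟨hglim, Filter.Eventually.of_forall hg⟩
  -- construct the weak limit of the controls via an ultrafilter limit functional
  have hbound : ∀ w : H, ∀ n, |⟪U n, w⟫| ≤ M * ‖w‖ := by
    intro w n
    calc |⟪U n, w⟫| ≤ ‖U n‖ * ‖w‖ := abs_real_inner_le_norm _ _
      _ ≤ M * ‖w‖ := by
          apply mul_le_mul_of_nonneg_right (hUnorm n) (norm_nonneg w)
  choose l hlbound hllim using fun w : H =>
    ult_lim_of_bounded 𝒰 (fun n => ⟪U n, w⟫) (M * ‖w‖) (hbound w)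
  have hladd : ∀ w₁ w₂ : H, l (w₁ + w₂) = l w₁ + l w₂ := by
    intro w₁ w₂
    refine tendsto_nhds_unique (hllim (w₁ + w₂)) ?_
    have := (hllim w₁).add (hllim w₂)
    simpa [inner_add_right] using this
  have hlsmul : ∀ (c : ℝ) (w : H), l (c • w) = c * l w := by
    intro c w
    refine tendsto_nhds_unique (hllim (c • w)) ?_
    have := (hllim w).const_mul c
    simpa [inner_smul_right] using this
  set φ : H →L[ℝ] ℝ :=
    LinearMap.mkContinuous
      { toFun := l, map_add' := hladd, map_smul' := hlsmul } M
      (fun w => by simpa [Real.norm_eq_abs] using hlbound w) with hφ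
  set u : H := (InnerProductSpace.toDual ℝ H).symm φ with hu
  have huw : ∀ w : H, ⟪u, w⟫ = l w := fun w => InnerProductSpace.toDual_symm_apply
  have hunorm : ‖u‖ ≤ M := by
    rw [hu, LinearIsometryEquiv.norm_map]
    exact LinearMap.mkContinuous_norm_le _ hM.le _
  -- weak convergence of the controls
  have hweak : ∀ w : H, Tendsto (fun n => ⟪U n, w⟫) 𝒰 (nhds ⟪u, w⟫) := by
    intro w; rw [huw]; exact hllim w
  -- the candidate limit state
  set v : H := S L y₀ + S (L - τ) (P u) with hv
  -- key inequality : ⟪v, w⟫ ≤ r * ‖w‖ for all w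
  have hkey : ∀ w : H, ⟪v, w⟫ ≤ r * ‖w‖ := by
    intro w
    -- limit of the inner products of the states
    have hterm1 : Tendsto (fun n => ⟪S (T n) y₀, w⟫) 𝒰 (nhds ⟪S L y₀, w⟫) := by
      have hcy : ContinuousWithinAt (fun s => S s y₀) (Set.Ici (0 : ℝ)) L :=
        (hScont y₀) L hL0
      have hTlim' : Tendsto (fun n => S (T n) y₀) 𝒰 (nhds (S L y₀)) := by
        apply hcy.tendsto.comp
        rw [tendsto_nhdsWithin_iff]
        exact ⟨hTlim, Filter.Eventually.of_forall hT0⟩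
      exact hTlim'.inner tendsto_const_nhds
    have hrw : ∀ n, ⟪S (t n) (P (U n)), w⟫ = ⟪U n, P (S (t n) w)⟫ := by
      intro n
      rw [hSsa (t n) (ht0 n), hPsa]
    have hterm2 : Tendsto (fun n => ⟪S (t n) (P (U n)), w⟫) 𝒰
        (nhds ⟪S (L - τ) (P u), w⟫) := by
      have hSw : Tendsto (fun n => S (t n) w) 𝒰 (nhds (S (L - τ) w)) :=
        hSc w t ht0 hLτ0 htlim
      have hdiff : Tendsto (fun n => ⟪U n, P (S (t n) w)⟫ - ⟪U n, P (S (L - τ) w)⟫) 𝒰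
          (nhds 0) := by
        apply squeeze_zero_norm (a := fun n => M * ‖S (t n) w - S (L - τ) w‖)
        · intro n
          rw [← inner_sub_right, ← map_sub]
          calc ‖⟪U n, P (S (t n) w - S (L - τ) w)⟫‖
              ≤ ‖U n‖ * ‖P (S (t n) w - S (L - τ) w)‖ := by
                rw [Real.norm_eq_abs]; exact abs_real_inner_le_norm _ _
            _ ≤ M * ‖S (t n) w - S (L - τ) w‖ :=
                mul_le_mul (hUnorm n) (hPnorm _) (norm_nonneg _)
                  (le_trans (norm_nonneg _) (hUnorm n))
        · have : Tendsto (fun n => S (t n) w - S (L - τ) w) 𝒰 (nhds 0) := by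
            simpa using hSw.sub (tendsto_const_nhds (x := S (L - τ) w))
          simpa using (this.norm.const_mul M)
      have hmain : Tendsto (fun n => ⟪U n, P (S (t n) w)⟫) 𝒰
          (nhds ⟪u, P (S (L - τ) w)⟫) := by
        have := hdiff.add (hweak (P (S (L - τ) w)))
        simpa using this
      have heq : ⟪u, P (S (L - τ) w)⟫ = ⟪S (L - τ) (P u), w⟫ := by
        rw [hSsa (L - τ) hLτ0, hPsa]
      rw [← heq]
      simp only [hrw]
      exact hmain
    have hsum : Tendsto (fun n => ⟪S (T n) y₀ + S (t n) (P (U n)), w⟫) 𝒰 (nhds ⟪v, w⟫) := by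
      rw [hv]
      simp only [inner_add_left]
      exact hterm1.add hterm2
    -- each term is bounded by r‖w‖
    have hbd : ∀ n, ⟪S (T n) y₀ + S (t n) (P (U n)), w⟫ ≤ r * ‖w‖ := by
      intro n
      calc ⟪S (T n) y₀ + S (t n) (P (U n)), w⟫
          ≤ ‖S (T n) y₀ + S (t n) (P (U n))‖ * ‖w‖ := real_inner_le_norm _ _
        _ ≤ r * ‖w‖ := mul_le_mul_of_nonneg_right (hUr n) (norm_nonneg w)
    exact le_of_tendsto hsum (Filter.Eventually.of_forall hbd)
  -- conclude ‖v‖ ≤ r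
  have hvr : ‖v‖ ≤ r := by
    rcases eq_or_lt_of_le (norm_nonneg v) with h0 | h0
    · rw [← h0]; exact hr.le
    · have := hkey v
      rw [real_inner_self_eq_norm_mul_norm] at this
      exact le_of_mul_le_mul_right this h0
  -- L ∈ A τ, hence tS M τ ≤ L
  have hLA : L ∈ A τ := ⟨hτL, u, hunorm, hvr⟩
  calc tS M τ = sInf (A τ) := htS' τ
    _ ≤ L := csInf_le (hbdd τ) hLA
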